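/- Fix ε, φ ∈ ℝ with |ε| > 1. Then the distance from the spectrum of T_{n,ε,φ} to the point ε + ε^{-1} tends to 0 as n → ∞; i.e., for every n there exists an eigenvalue μ_n of T_{n,ε,φ} such that μ_n → ε + ε^{-1} as n → ∞. Since |ε + ε^{-1}| > 2, the eigenvalue μ_n lies outside [−2, 2] for all sufficiently large n. Analogously, if |φ| > 1 then there exists an eigenvalue ν_n of T_{n,ε,φ} such that ν_n → φ + φ^{-1} as n → ∞, and ν_n lies outside [−2, 2] for all sufficiently large n. -/

import Mathlib

open Matrix Real Filter

/-- The n×n tridiagonal matrix `T_{n,ε,φ}` with `(T)_{11} = ε`, `(T)_{nn} = φ`,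
zero elsewhere on the diagonal, and ones on the first super- and subdiagonals. -/
noncomputable def Ttri (n : ℕ) (e f : ℝ) : Matrix (Fin n) (Fin n) ℝ :=
  fun i j =>
    if i = j then (if (i : ℕ) = 0 then e else if (i : ℕ) = n - 1 then f else 0)
    else if (i : ℕ) + 1 = (j : ℕ) ∨ (j : ℕ) + 1 = (i : ℕ) then 1 else 0

/-- `x` is an eigenvalue of `T_{n,ε,φ}`. -/
def HasEigen (n : ℕ) (e f x : ℝ) : Prop :=
  ∃ v : Fin n → ℝ, v ≠ 0 ∧ (Ttri n e f).mulVec v = x • v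

/-- For a real symmetric matrix, an approximate eigenvalue with residual `δ` is within `δ`
of a true eigenvalue. -/
lemma exists_eigen_near {n : ℕ} (hn : 1 ≤ n) {A : Matrix (Fin n) (Fin n) ℝ}
    (hA : A.IsHermitian) (lam δ : ℝ) (w : EuclideanSpace ℝ (Fin n))
    (hw : 1 ≤ ‖w‖)
    (hres : ‖Matrix.toEuclideanLin A w - lam • w‖ ≤ δ) :
    ∃ μ, (∃ u : Fin n → ℝ, u ≠ 0 ∧ A *ᵥ u = μ • u) ∧ |μ - lam| ≤ δ := by
  haveI : NeZero n := ⟨by omega⟩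
  set b := hA.eigenvectorBasis with hb
  set μ := hA.eigenvalues with hμ
  obtain ⟨i₀, -, hmin⟩ := Finset.univ.exists_min_image (fun i => |μ i - lam|)
    Finset.univ_nonempty
  refine ⟨μ i₀, ⟨b i₀, ?_, hA.mulVec_eigenvectorBasis i₀⟩, ?_⟩
  · exact fun h => b.orthonormal.ne_zero i₀ (by ext j; simpa using congrFun h j)
  · set c : Fin n → ℝ := fun i => b.repr w i with hc
    have hw_sum : w = ∑ i, c i • b i := (b.sum_repr w).symm
    have hTb : ∀ i, Matrix.toEuclideanLin A (b i) = μ i • b i := by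
      intro i
      rw [Matrix.toEuclideanLin_apply]
      exact congrArg (WithLp.equiv 2 (Fin n → ℝ)).symm (hA.mulVec_eigenvectorBasis i)
    have hres_sum : Matrix.toEuclideanLin A w - lam • w
        = ∑ i, (c i * (μ i - lam)) • b i := by
      conv_lhs => rw [hw_sum]
      rw [map_sum, Finset.smul_sum, ← Finset.sum_sub_distrib]
      refine Finset.sum_congr rfl fun i _ => ?_
      rw [LinearMap.map_smul, hTb i, smul_smul, smul_smul, ← sub_smul]
      ring_nf
    have hnorm1 : ‖Matrix.toEuclideanLin A w - lam • w‖ ^ 2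
        = ∑ i, (c i * (μ i - lam)) ^ 2 := by
      rw [← real_inner_self_eq_norm_sq, hres_sum,
        b.orthonormal.inner_sum]
      simp [sq]
    have hnorm2 : ‖w‖ ^ 2 = ∑ i, c i ^ 2 := by
      rw [← real_inner_self_eq_norm_sq]
      conv_lhs => rw [hw_sum]
      rw [b.orthonormal.inner_sum]
      simp [sq]
    have hδ0 : 0 ≤ δ := le_trans (norm_nonneg _) hres
    have key : |μ i₀ - lam| ^ 2 * ‖w‖ ^ 2 ≤ δ ^ 2 := by
      have h1 : |μ i₀ - lam| ^ 2 * ‖w‖ ^ 2 ≤ ∑ i, (c i * (μ i - lam)) ^ 2 := by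
        rw [hnorm2, Finset.mul_sum]
        refine Finset.sum_le_sum fun i _ => ?_
        have := hmin i (Finset.mem_univ i)
        have h2 : |μ i₀ - lam| ^ 2 ≤ (μ i - lam) ^ 2 := by
          rw [← sq_abs (μ i - lam)]
          exact pow_le_pow_left₀ (abs_nonneg _) this 2
        nlinarith [sq_nonneg (c i)]
      calc |μ i₀ - lam| ^ 2 * ‖w‖ ^ 2 ≤ ∑ i, (c i * (μ i - lam)) ^ 2 := h1
        _ = ‖Matrix.toEuclideanLin A w - lam • w‖ ^ 2 := hnorm1.symm
        _ ≤ δ ^ 2 := by nlinarith [norm_nonneg (Matrix.toEuclideanLin A w - lam • w)]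
    have hw2 : 1 ≤ ‖w‖ ^ 2 := by nlinarith
    have hsq : |μ i₀ - lam| ^ 2 ≤ δ ^ 2 := by
      nlinarith [sq_nonneg (μ i₀ - lam), abs_nonneg (μ i₀ - lam)]
    nlinarith [hsq, hδ0, abs_nonneg (μ i₀ - lam), sq_nonneg (|μ i₀ - lam| - δ),
      sq_nonneg (|μ i₀ - lam| + δ)]

lemma Ttri_herm (n : ℕ) (e f : ℝ) : (Ttri n e f).IsHermitian := by
  ext i j
  simp only [conjTranspose_apply, Ttri, star_trivial]
  rcases eq_or_ne i j with h | h
  · subst h; rfl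
  · rw [if_neg (Ne.symm h), if_neg h]
    exact if_congr or_comm rfl rfl

lemma sum_ite_coe (n a : ℕ) (c : ℝ) :
    ∑ j : Fin n, (if (j : ℕ) = a then c else 0) = if a < n then c else 0 := by
  by_cases h : a < n
  · rw [if_pos h, Finset.sum_eq_single (⟨a, h⟩ : Fin n)]
    · simp
    · intro b _ hb
      exact if_neg fun hba => hb (Fin.ext hba)
    · simp
  · rw [if_neg h]
    exact Finset.sum_eq_zero fun j _ => if_neg (by omega)

lemma Ttri_row (n : ℕ) (hn : 2 ≤ n) (e f : ℝ) (he : e ≠ 0) (i : Fin n) :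
    (Ttri n e f *ᵥ fun j : Fin n => e⁻¹ ^ (j : ℕ)) i
      = (e + e⁻¹) * e⁻¹ ^ (i : ℕ)
        + (if (i : ℕ) = n - 1 then (f - e⁻¹) * e⁻¹ ^ (n - 1) else 0) := by
  have hi := i.isLt
  have claim : ∀ j : Fin n, Ttri n e f i j * e⁻¹ ^ (j : ℕ)
      = (if (j : ℕ) = (i : ℕ)
            then (if (i : ℕ) = 0 then e else if (i : ℕ) = n - 1 then f else 0) else 0)
          * e⁻¹ ^ (i : ℕ)
        + ((if (j : ℕ) = (i : ℕ) + 1 then e⁻¹ ^ ((i : ℕ) + 1) else 0)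
        + (if (j : ℕ) = (i : ℕ) - 1 ∧ 1 ≤ (i : ℕ) then e⁻¹ ^ ((i : ℕ) - 1) else 0)) := by
    intro j
    have hj := j.isLt
    simp only [Ttri]
    by_cases hij : i = j
    · have hv : (j : ℕ) = (i : ℕ) := by rw [hij]
      rw [if_pos hij, if_pos hv,
        if_neg (show ¬((j : ℕ) = (i : ℕ) + 1) by omega),
        if_neg (show ¬((j : ℕ) = (i : ℕ) - 1 ∧ 1 ≤ (i : ℕ)) by omega), hv]
      ring
    · have hne : ¬((j : ℕ) = (i : ℕ)) := fun h => hij (Fin.ext h.symm)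
      rw [if_neg hij, if_neg hne]
      by_cases h1 : (i : ℕ) + 1 = (j : ℕ)
      · rw [if_pos (Or.inl h1), if_pos (show (j : ℕ) = (i : ℕ) + 1 by omega),
          if_neg (show ¬((j : ℕ) = (i : ℕ) - 1 ∧ 1 ≤ (i : ℕ)) by omega), ← h1]
        ring
      · by_cases h2 : (j : ℕ) + 1 = (i : ℕ)
        · rw [if_pos (Or.inr h2),
            if_neg (show ¬((j : ℕ) = (i : ℕ) + 1) by omega),
            if_pos (show (j : ℕ) = (i : ℕ) - 1 ∧ 1 ≤ (i : ℕ) by omega),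
            show (j : ℕ) = (i : ℕ) - 1 by omega]
          ring
        · rw [if_neg (show ¬((i : ℕ) + 1 = (j : ℕ) ∨ (j : ℕ) + 1 = (i : ℕ)) by omega),
            if_neg (show ¬((j : ℕ) = (i : ℕ) + 1) by omega),
            if_neg (show ¬((j : ℕ) = (i : ℕ) - 1 ∧ 1 ≤ (i : ℕ)) by omega)]
          ring
  rw [mulVec, dotProduct]
  simp_rw [claim]
  rw [Finset.sum_add_distrib, Finset.sum_add_distrib, ← Finset.sum_mul, sum_ite_coe,
    if_pos hi]
  have hp2 : ∑ j : Fin n, (if (j : ℕ) = (i : ℕ) + 1 then e⁻¹ ^ ((i : ℕ) + 1) else 0)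
      = if (i : ℕ) + 1 < n then e⁻¹ ^ ((i : ℕ) + 1) else 0 := sum_ite_coe n _ _
  have hp3 : ∑ j : Fin n, (if (j : ℕ) = (i : ℕ) - 1 ∧ 1 ≤ (i : ℕ)
        then e⁻¹ ^ ((i : ℕ) - 1) else 0)
      = if 1 ≤ (i : ℕ) then e⁻¹ ^ ((i : ℕ) - 1) else 0 := by
    by_cases hk1 : 1 ≤ (i : ℕ)
    · rw [if_pos hk1]
      have hco : ∀ j : Fin n, (if (j : ℕ) = (i : ℕ) - 1 ∧ 1 ≤ (i : ℕ)
            then e⁻¹ ^ ((i : ℕ) - 1) else 0)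
          = (if (j : ℕ) = (i : ℕ) - 1 then e⁻¹ ^ ((i : ℕ) - 1) else 0) := by
        intro j
        by_cases h : (j : ℕ) = (i : ℕ) - 1
        · rw [if_pos ⟨h, hk1⟩, if_pos h]
        · rw [if_neg (fun hc => h hc.1), if_neg h]
      simp_rw [hco]
      rw [sum_ite_coe, if_pos (by omega)]
    · rw [if_neg hk1]
      exact Finset.sum_eq_zero fun j _ => if_neg fun hc => hk1 hc.2
  rw [hp2, hp3]
  by_cases hk0 : (i : ℕ) = 0
  · rw [if_pos hk0, if_pos (show (i : ℕ) + 1 < n by omega),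
      if_neg (show ¬(1 ≤ (i : ℕ)) by omega), if_neg (show ¬((i : ℕ) = n - 1) by omega), hk0]
    norm_num
  · have h1 : e⁻¹ ^ ((i : ℕ) - 1) = e * e⁻¹ ^ (i : ℕ) := by
      rw [show (i : ℕ) = ((i : ℕ) - 1) + 1 by omega, pow_succ]
      have : ((i : ℕ) - 1 + 1) - 1 = (i : ℕ) - 1 := by omega
      rw [this]
      field_simp
    by_cases hkl : (i : ℕ) = n - 1
    · rw [if_neg hk0, if_pos hkl, if_neg (show ¬((i : ℕ) + 1 < n) by omega),
        if_pos (show 1 ≤ (i : ℕ) by omega), if_pos hkl, h1, ← hkl]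
      ring
    · rw [if_neg hk0, if_neg hkl, if_pos (show (i : ℕ) + 1 < n by omega),
        if_pos (show 1 ≤ (i : ℕ) by omega), if_neg hkl, h1, pow_succ]
      ring

lemma Ttri_rev (n : ℕ) (hn : 2 ≤ n) (e f : ℝ) (i j : Fin n) :
    Ttri n f e i j
      = Ttri n e f ⟨n - 1 - (i : ℕ), by omega⟩ ⟨n - 1 - (j : ℕ), by omega⟩ := by
  have hi := i.isLt; have hj := j.isLt
  simp only [Ttri, Fin.ext_iff, Fin.val_mk]
  split_ifs <;> first | rfl | omega

lemma hasEigen_swap (n : ℕ) (hn : 2 ≤ n) (e f x : ℝ) (h : HasEigen n f e x) :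
    HasEigen n e f x := by
  obtain ⟨w, hw0, hw⟩ := h
  set r : Fin n → Fin n := fun i => ⟨n - 1 - (i : ℕ), by omega⟩ with hr
  have hrr : Function.Involutive r := by
    intro i
    have := i.isLt
    apply Fin.ext
    simp only [hr]
    omega
  refine ⟨fun i => w (r i), ?_, ?_⟩
  · intro h0
    apply hw0
    funext i
    have := congrFun h0 (r i)
    simpa [hrr i] using this
  · funext i
    have hw' := congrFun hw (r i)
    simp only [mulVec, dotProduct, Pi.smul_apply, smul_eq_mul] at hw' ⊢
    have hsum : ∑ j, Ttri n e f i (r j) * w (r (r j)) = ∑ j, Ttri n e f i j * w (r j) :=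
      Fintype.sum_bijective r hrr.bijective _ _ (fun _ => rfl)
    rw [← hsum]
    have hentry : ∀ j, Ttri n e f i (r j) * w (r (r j)) = Ttri n f e (r i) j * w j := by
      intro j
      rw [hrr j, Ttri_rev n hn e f (r i) j]
      congr 2 <;> (apply Fin.ext; simp only [hr]; have := i.isLt; have := j.isLt; omega)
    simp_rw [hentry]
    exact hw'

lemma approx (n : ℕ) (hn : 2 ≤ n) (e f : ℝ) (he : 1 < |e|) :
    ∃ μ, HasEigen n e f μ ∧ |μ - (e + e⁻¹)| ≤ |f - e⁻¹| * |e|⁻¹ ^ (n - 1) := by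
  have he0 : e ≠ 0 := by
    intro h; rw [h] at he; simp at he; linarith
  set w : EuclideanSpace ℝ (Fin n) :=
    (WithLp.equiv 2 (Fin n → ℝ)).symm (fun j : Fin n => e⁻¹ ^ (j : ℕ)) with hwdef
  have hw : 1 ≤ ‖w‖ := by
    rw [EuclideanSpace.norm_eq, show (1:ℝ) = Real.sqrt 1 from Real.sqrt_one.symm]
    apply Real.sqrt_le_sqrt
    have h0 : ‖w (⟨0, by omega⟩ : Fin n)‖ ^ 2 = 1 := by
      show ‖e⁻¹ ^ ((⟨0, by omega⟩ : Fin n) : ℕ)‖ ^ 2 = 1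
      norm_num
    calc (1:ℝ) = ‖w (⟨0, by omega⟩ : Fin n)‖ ^ 2 := h0.symm
      _ ≤ ∑ i, ‖w i‖ ^ 2 :=
          Finset.single_le_sum (f := fun i : Fin n => ‖w i‖ ^ 2)
            (fun i _ => sq_nonneg _) (Finset.mem_univ _)
  have hres_eq : Matrix.toEuclideanLin (Ttri n e f) w - (e + e⁻¹) • w
      = EuclideanSpace.single (⟨n - 1, by omega⟩ : Fin n) ((f - e⁻¹) * e⁻¹ ^ (n - 1)) := by
    ext i
    show (Ttri n e f *ᵥ fun j : Fin n => e⁻¹ ^ (j : ℕ)) i - (e + e⁻¹) * e⁻¹ ^ (i : ℕ) = _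
    rw [Ttri_row n hn e f he0 i, EuclideanSpace.single_apply]
    have : (i = (⟨n - 1, by omega⟩ : Fin n)) ↔ ((i : ℕ) = n - 1) := by
      rw [Fin.ext_iff]
    rw [if_congr this.symm rfl rfl]
    ring
  have hnorm : ‖Matrix.toEuclideanLin (Ttri n e f) w - (e + e⁻¹) • w‖
      = |f - e⁻¹| * |e|⁻¹ ^ (n - 1) := by
    rw [hres_eq, EuclideanSpace.norm_single, Real.norm_eq_abs, abs_mul, abs_pow, abs_inv]
  obtain ⟨μ, hμ1, hμ2⟩ := exists_eigen_near (by omega) (Ttri_herm n e f) (e + e⁻¹)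
    (|f - e⁻¹| * |e|⁻¹ ^ (n - 1)) w hw (le_of_eq hnorm)
  exact ⟨μ, hμ1, hμ2⟩

lemma master (e f : ℝ) (he : 1 < |e|) :
    ∃ mu : ℕ → ℝ,
      (∀ n, 2 ≤ n → HasEigen n e f (mu n)) ∧
      Tendsto mu atTop (nhds (e + e⁻¹)) ∧
      ∀ᶠ n in atTop, mu n ∉ Set.Icc (-2 : ℝ) 2 := by
  have he0 : e ≠ 0 := by intro h; rw [h] at he; simp at he; linarith
  classical
  set mu : ℕ → ℝ := fun n =>
    if h : 2 ≤ n then (approx n h e f he).choose else e + e⁻¹ with hmu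
  have h1 : ∀ n, 2 ≤ n → HasEigen n e f (mu n) := by
    intro n hn
    simp only [hmu, dif_pos hn]
    exact (approx n hn e f he).choose_spec.1
  have hbound : ∀ n, 2 ≤ n → |mu n - (e + e⁻¹)| ≤ |f - e⁻¹| * |e|⁻¹ ^ (n - 1) := by
    intro n hn
    simp only [hmu, dif_pos hn]
    exact (approx n hn e f he).choose_spec.2
  have hrlt : |e|⁻¹ < 1 := inv_lt_one_of_one_lt₀ he
  have hr0 : (0:ℝ) ≤ |e|⁻¹ := inv_nonneg.2 (abs_nonneg e)
  have hpow : Tendsto (fun n : ℕ => |f - e⁻¹| * |e|⁻¹ ^ (n - 1)) atTop (nhds 0) := by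
    have h := (tendsto_pow_atTop_nhds_zero_of_lt_one hr0 hrlt).comp
      (tendsto_sub_atTop_nat 1)
    simpa using h.const_mul (|f - e⁻¹|)
  have h2 : Tendsto mu atTop (nhds (e + e⁻¹)) := by
    rw [tendsto_iff_dist_tendsto_zero]
    refine squeeze_zero' (Eventually.of_forall fun n => dist_nonneg) ?_ hpow
    filter_upwards [eventually_ge_atTop 2] with n hn
    rw [Real.dist_eq]
    exact hbound n hn
  have hlam : e + e⁻¹ ∉ Set.Icc (-2 : ℝ) 2 := by
    intro hmem
    obtain ⟨hm1, hm2⟩ := hmem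
    have hee : e * e⁻¹ = 1 := mul_inv_cancel₀ he0
    rcases lt_abs.mp he with h | h
    · nlinarith
    · nlinarith
  have h3 : ∀ᶠ n in atTop, mu n ∉ Set.Icc (-2 : ℝ) 2 := by
    have := h2.eventually_mem ((isClosed_Icc (a := (-2:ℝ)) (b := 2)).isOpen_compl.mem_nhds hlam)
    filter_upwards [this] with n hn
    exact hn
  exact ⟨mu, h1, h2, h3⟩

theorem stmt7 (e f : ℝ) (he : 1 < |e|) :
    (∃ mu : ℕ → ℝ,
      (∀ n, 2 ≤ n → HasEigen n e f (mu n)) ∧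
      Tendsto mu atTop (nhds (e + e⁻¹)) ∧
      ∀ᶠ n in atTop, mu n ∉ Set.Icc (-2 : ℝ) 2) ∧
    (1 < |f| →
      ∃ nu : ℕ → ℝ,
        (∀ n, 2 ≤ n → HasEigen n e f (nu n)) ∧
        Tendsto nu atTop (nhds (f + f⁻¹)) ∧
        ∀ᶠ n in atTop, nu n ∉ Set.Icc (-2 : ℝ) 2) := by
  refine ⟨master e f he, fun hf => ?_⟩
  obtain ⟨nu, h1, h2, h3⟩ := master f e hf
  exact ⟨nu, fun n hn => hasEigen_swap n hn e f (nu n) (h1 n hn), h2, h3⟩
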